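/- arXiv:2311.13465 — 3 statements merged into one kernel-verified Lean document; each statement's English description precedes it below -/
import Mathlib

section
/- Let $W>0$, $T\geq 0$, and let $\xi$ have distribution function $F^{(T)}_W(t)=1-\exp(-W(e^t-e^T))$ for $t\geq T$ (and $0$ for $t<T$). Then $\mathbb{E}(\xi-T)\leq 1/(We^T)$ and $\mathbb{E}(\xi-T)^2\leq 2/(We^T)^2$. -/
open MeasureTheory

theorem stmt_1 {Ω : Type*} [MeasurableSpace Ω] (μ : Measure Ω) [IsProbabilityMeasure μ]
    (W T : ℝ) (hW : 0 < W) (hT : 0 ≤ T) (ξ : Ω → ℝ) (hξ : Measurable ξ)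
    (hcdf : ∀ t : ℝ, μ {ω | ξ ω ≤ t}
      = ENNReal.ofReal (if T ≤ t then 1 - Real.exp (-(W * (Real.exp t - Real.exp T))) else 0))
    (hint1 : Integrable (fun ω => ξ ω - T) μ)
    (hint2 : Integrable (fun ω => (ξ ω - T) ^ 2) μ) :
    (∫ ω, (ξ ω - T) ∂μ) ≤ 1 / (W * Real.exp T) ∧
      (∫ ω, (ξ ω - T) ^ 2 ∂μ) ≤ 2 / (W * Real.exp T) ^ 2 := by
  set l : ℝ := W * Real.exp T with hl_def
  have hl : 0 < l := by positivity
  -- ξ ≥ T almost everywhere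
  have hae : ∀ᵐ ω ∂μ, T ≤ ξ ω := by
    rw [Filter.eventually_iff, mem_ae_iff]
    have hsub : {ω | T ≤ ξ ω}ᶜ ⊆ ⋃ n : ℕ, {ω | ξ ω ≤ T - 1 / (n + 1)} := by
      intro ω hω
      simp only [Set.mem_compl_iff, Set.mem_setOf_eq, not_le] at hω
      obtain ⟨n, hn⟩ := exists_nat_one_div_lt (by linarith : (0:ℝ) < T - ξ ω)
      exact Set.mem_iUnion.2 ⟨n, by simp only [Set.mem_setOf_eq]; push_cast; push_cast at hn; linarith⟩
    refine measure_mono_null hsub (measure_iUnion_null fun n => ?_)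
    rw [hcdf, if_neg (by
      have : (0:ℝ) < 1 / ((n:ℝ) + 1) := by positivity
      linarith)]
    simp
  -- tail formula
  have tail : ∀ s : ℝ, 0 ≤ s →
      μ {ω | T + s < ξ ω}
        = ENNReal.ofReal (Real.exp (-(W * (Real.exp (T + s) - Real.exp T)))) := by
    intro s hs
    have hms : MeasurableSet {ω | ξ ω ≤ T + s} := measurableSet_le hξ measurable_const
    have hset : {ω | T + s < ξ ω} = {ω | ξ ω ≤ T + s}ᶜ := by ext ω; simp [not_le]
    have hexp : Real.exp (-(W * (Real.exp (T + s) - Real.exp T))) ≤ 1 := by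
      rw [Real.exp_le_one_iff, neg_nonpos]
      have := Real.exp_le_exp.2 (by linarith : T ≤ T + s)
      nlinarith
    rw [hset, measure_compl hms (measure_ne_top μ _), measure_univ, hcdf,
      if_pos (by linarith : T ≤ T + s), ← ENNReal.ofReal_one,
      ← ENNReal.ofReal_sub _ (by linarith)]
    norm_num
  -- real-valued tail bound
  have tailR : ∀ s : ℝ, 0 ≤ s →
      (μ {ω | T + s < ξ ω}).toReal ≤ Real.exp (-(l * s)) := by
    intro s hs
    rw [tail s hs, ENNReal.toReal_ofReal (Real.exp_nonneg _)]
    apply Real.exp_le_exp.2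
    rw [neg_le_neg_iff, Real.exp_add, hl_def]
    nlinarith [Real.add_one_le_exp s, Real.exp_pos T, hW.le]
  have fnn : (0 : Ω → ℝ) ≤ᵐ[μ] fun ω => ξ ω - T := hae.mono fun ω h => by
    simp only [Pi.zero_apply]; linarith
  have gnn : (0 : Ω → ℝ) ≤ᵐ[μ] fun ω => (ξ ω - T) ^ 2 :=
    Filter.Eventually.of_forall fun ω => sq_nonneg _
  constructor
  · rw [hint1.integral_eq_integral_meas_lt fnn]
    have hgint : IntegrableOn (fun t : ℝ => Real.exp (-(l * t))) (Set.Ioi 0) := by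
      simpa [neg_mul] using exp_neg_integrableOn_Ioi 0 hl
    calc ∫ t in Set.Ioi 0, (μ {a | t < ξ a - T}).toReal
        ≤ ∫ t in Set.Ioi 0, Real.exp (-(l * t)) := by
          refine integral_mono_of_nonneg
            (Filter.Eventually.of_forall fun t => ENNReal.toReal_nonneg) hgint ?_
          filter_upwards [ae_restrict_mem measurableSet_Ioi] with t ht
          have hseteq : {a | t < ξ a - T} = {ω | T + t < ξ ω} := by
            ext a; simp [lt_sub_iff_add_lt']
          rw [hseteq]
          exact tailR t (le_of_lt ht)
      _ = 1 / l := by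
          have h := Real.integral_rpow_mul_exp_neg_mul_Ioi (a := 1) one_pos hl
          simp only [sub_self, Real.rpow_zero, one_mul, Real.Gamma_one, mul_one,
            Real.rpow_one] at h
          simpa using h
  · rw [hint2.integral_eq_integral_meas_lt gnn]
    have hgint : IntegrableOn (fun t : ℝ => Real.exp (-(l * Real.sqrt t))) (Set.Ioi 0) := by
      rw [← integrableOn_Ioi_comp_rpow_iff _ (two_ne_zero)]
      refine IntegrableOn.congr_fun
        ((integrableOn_rpow_mul_exp_neg_mul_rpow (p := 1) (by norm_num : (-1:ℝ) < 1) one_pos hl).const_mul 2)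
        (fun x hx => ?_) measurableSet_Ioi
      have hx0 : (0:ℝ) < x := hx
      simp only [smul_eq_mul]
      rw [show |(2:ℝ)| = 2 by norm_num, show (2:ℝ) - 1 = 1 by norm_num, Real.rpow_one,
        show x ^ (2:ℝ) = x ^ 2 by rw [← Real.rpow_natCast x 2]; norm_num,
        Real.sqrt_sq hx0.le]
      ring_nf
    calc ∫ t in Set.Ioi 0, (μ {a | t < (ξ a - T) ^ 2}).toReal
        ≤ ∫ t in Set.Ioi 0, Real.exp (-(l * Real.sqrt t)) := by
          refine integral_mono_of_nonneg
            (Filter.Eventually.of_forall fun t => ENNReal.toReal_nonneg) hgint ?_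
          filter_upwards [ae_restrict_mem measurableSet_Ioi] with t ht
          have ht0 : (0:ℝ) < t := ht
          have hseteq : {a | t < (ξ a - T) ^ 2} =ᵐ[μ] {ω | T + Real.sqrt t < ξ ω} := by
            filter_upwards [hae] with ω hω
            change (t < (ξ ω - T) ^ 2) = (T + Real.sqrt t < ξ ω)
            rw [eq_iff_iff]
            rcases eq_or_lt_of_le hω with h | h
            · constructor
              · intro h2; rw [← h] at h2; simp at h2; linarith
              · intro h2; rw [← h] at h2
                exact absurd h2 (by nlinarith [Real.sqrt_nonneg t])
            · rw [← lt_sub_iff_add_lt', Real.sqrt_lt' (by linarith)]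
          rw [measure_congr hseteq]
          exact tailR _ (Real.sqrt_nonneg t)
      _ = 2 / l ^ 2 := by
          have h := integral_comp_rpow_Ioi_of_pos
            (g := fun y => Real.exp (-(l * Real.sqrt y))) (p := 2) two_pos
          rw [← h, setIntegral_congr_fun measurableSet_Ioi
            (g := fun x : ℝ => 2 * (x * Real.exp (-(l * x))))
            (fun x hx => by
              have hx0 : (0:ℝ) < x := hx
              simp only [smul_eq_mul]
              rw [show (2:ℝ) - 1 = 1 by norm_num, Real.rpow_one,
                show x ^ (2:ℝ) = x ^ 2 by rw [← Real.rpow_natCast x 2]; norm_num,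
                Real.sqrt_sq hx0.le]
              ring), integral_const_mul]
          have h2 := Real.integral_rpow_mul_exp_neg_mul_Ioi (a := 2) two_pos hl
          norm_num [Real.Gamma_two, Real.rpow_one] at h2
          rw [h2]
          field_simp
end

section
/- Let $V$ be a finite set with $|V|=d\geq 2$ and $(x_i)_{i\in V}$ a probability vector. With $H(x)=\sum_i x_i(1-x_i)$ and $J(x)=2\sum_{i\in V}x_i(N_i(x)-H(x))^2$ where $N_i(x)=1-x_i$, one has $J(x)=2\sum_{i\in V}x_i(x_i-\tfrac{1}{d})^2-2\left(H(z^*)-H(x)\right)^2$, where $z^*_i=1/d$ for all $i$. -/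
theorem stmt_6 {V : Type*} [Fintype V] (d : ℕ) (hd : d = Fintype.card V) (hd2 : 2 ≤ d)
    (x : V → ℝ) (hx0 : ∀ i, 0 ≤ x i) (hx1 : ∑ i, x i = 1) :
    2 * ∑ i, x i * ((1 - x i) - ∑ j, x j * (1 - x j)) ^ 2
      = 2 * (∑ i, x i * (x i - 1 / d) ^ 2)
        - 2 * ((1 - 1 / d) - ∑ i, x i * (1 - x i)) ^ 2 := by
  set a : ℝ := ∑ i, x i ^ 2 with ha
  set b : ℝ := ∑ i, x i ^ 3 with hb
  set c : ℝ := (1 : ℝ) / d with hc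
  have hH : ∑ j, x j * (1 - x j) = 1 - a := by
    have : ∀ j ∈ Finset.univ, x j * (1 - x j) = x j - x j ^ 2 := by intros; ring
    rw [Finset.sum_congr rfl this, Finset.sum_sub_distrib, hx1, ha]
  have h1 : ∑ i, x i * ((1 - x i) - (1 - a)) ^ 2 = b - a ^ 2 := by
    have : ∀ i ∈ Finset.univ, x i * ((1 - x i) - (1 - a)) ^ 2
        = a ^ 2 * x i - 2 * a * x i ^ 2 + x i ^ 3 := by intros; ring
    rw [Finset.sum_congr rfl this, Finset.sum_add_distrib, Finset.sum_sub_distrib,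
      ← Finset.mul_sum, ← Finset.mul_sum, hx1, ← ha, ← hb]
    ring
  have h2 : ∑ i, x i * (x i - c) ^ 2 = b - 2 * c * a + c ^ 2 := by
    have : ∀ i ∈ Finset.univ, x i * (x i - c) ^ 2
        = x i ^ 3 - 2 * c * x i ^ 2 + c ^ 2 * x i := by intros; ring
    rw [Finset.sum_congr rfl this, Finset.sum_add_distrib, Finset.sum_sub_distrib,
      ← Finset.mul_sum, ← Finset.mul_sum, hx1, ← ha, ← hb]
    ring
  rw [hH, h1, h2]
  ring
end

section
/- Let $d\geq 2$ and let $C_1<2/d<C_2$ be real constants. Then there exists $\delta>0$ such that for every probability vector $x$ on $d$ vertices with $\|x-z^*\|_2<\delta$ (where $z^*$ is the uniform vector), one has $C_1(H(z^*)-H(x))\leq J(x)\leq C_2(H(z^*)-H(x))$, where $H(x)=\sum_i x_i(1-x_i)$ and $J(x)=2\sum_i x_i(1-x_i-H(x))^2$. -/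
theorem stmt_7 (d : ℕ) (hd : 2 ≤ d) (C₁ C₂ : ℝ) (hC₁ : C₁ < 2 / d) (hC₂ : 2 / d < C₂) :
    ∃ δ > 0, ∀ x : Fin d → ℝ, (∀ i, 0 ≤ x i) → (∑ i, x i = 1) →
      Real.sqrt (∑ i, (x i - 1 / d) ^ 2) < δ →
      C₁ * ((1 - 1 / d) - ∑ i, x i * (1 - x i))
          ≤ 2 * ∑ i, x i * ((1 - x i) - ∑ j, x j * (1 - x j)) ^ 2
        ∧ 2 * ∑ i, x i * ((1 - x i) - ∑ j, x j * (1 - x j)) ^ 2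
          ≤ C₂ * ((1 - 1 / d) - ∑ i, x i * (1 - x i)) := by
  have hd0 : 0 < (d:ℝ) := by
    have : 0 < d := by omega
    exact_mod_cast this
  have hε₁ : 0 < 2 / (d:ℝ) - C₁ := sub_pos.mpr hC₁
  have hε₂ : 0 < C₂ - 2 / (d:ℝ) := sub_pos.mpr hC₂
  refine ⟨min 1 (min ((2/(d:ℝ) - C₁)/4) ((C₂ - 2/(d:ℝ))/4)),
    lt_min one_pos (lt_min (by linarith) (by linarith)), ?_⟩
  intro x hx hsum hδ
  obtain ⟨S, hS⟩ : ∃ S : ℝ, S = ∑ i, (x i - 1/(d:ℝ))^2 := ⟨_, rfl⟩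
  obtain ⟨T, hT⟩ : ∃ T : ℝ, T = ∑ i, (x i - 1/(d:ℝ))^3 := ⟨_, rfl⟩
  rw [show (fun i => (x i - 1/(d:ℝ))^2) = (fun i => (x i - 1/(d:ℝ))^2) from rfl, ← hS] at hδ
  have hSe : ∑ i, (x i - 1/(d:ℝ)) = 0 := by
    rw [Finset.sum_sub_distrib, hsum]
    simp [Finset.card_univ]
    field_simp
    norm_num
  have hS0 : 0 ≤ S := hS ▸ Finset.sum_nonneg fun i _ => sq_nonneg _
  have hH : ∑ j, x j * (1 - x j) = 1 - 1/(d:ℝ) - S := by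
    have h1 : ∀ i : Fin d, x i * (1 - x i)
        = (1/(d:ℝ))*(1 - 1/d) + (1 - 2/d) * (x i - 1/d) - (x i - 1/d)^2 := fun i => by ring
    rw [Finset.sum_congr rfl fun i _ => h1 i]
    simp only [Finset.sum_sub_distrib, Finset.sum_add_distrib, ← Finset.mul_sum, hSe,
      Finset.sum_const, Finset.card_univ, Fintype.card_fin, nsmul_eq_mul, mul_zero, add_zero]
    rw [← hS]
    field_simp
  have hkey : ∑ i, x i * ((1 - x i) - ∑ j, x j * (1 - x j)) ^ 2 = S/d - S^2 + T := by
    rw [hH]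
    have h2 : ∀ i : Fin d, x i * ((1 - x i) - (1 - 1/(d:ℝ) - S))^2
        = S^2*(1/d) + (S^2 - 2*S*(1/d)) * (x i - 1/d) + (1/d - 2*S)*(x i - 1/d)^2
          + (x i - 1/d)^3 := fun i => by ring
    rw [Finset.sum_congr rfl fun i _ => h2 i]
    simp only [Finset.sum_add_distrib, ← Finset.mul_sum, hSe,
      Finset.sum_const, Finset.card_univ, Fintype.card_fin, nsmul_eq_mul, mul_zero, add_zero]
    rw [← hS, ← hT]
    field_simp
    ring
  obtain ⟨s, hs⟩ : ∃ s : ℝ, s = Real.sqrt S := ⟨_, rfl⟩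
  rw [← hs] at hδ
  have hsS : s^2 = S := by rw [hs]; exact Real.sq_sqrt hS0
  have hs0 : 0 ≤ s := hs ▸ Real.sqrt_nonneg _
  have hs1 : s < 1 := lt_of_lt_of_le hδ (min_le_left _ _)
  have hsA : s ≤ (2/(d:ℝ) - C₁)/4 :=
    le_of_lt (lt_of_lt_of_le hδ ((min_le_right _ _).trans (min_le_left _ _)))
  have hsB : s ≤ (C₂ - 2/(d:ℝ))/4 :=
    le_of_lt (lt_of_lt_of_le hδ ((min_le_right _ _).trans (min_le_right _ _)))
  have habs : ∀ i : Fin d, |x i - 1/(d:ℝ)| ≤ s := by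
    intro i
    rw [hs, hS, ← Real.sqrt_sq_eq_abs]
    exact Real.sqrt_le_sqrt (Finset.single_le_sum (f := fun j => (x j - 1/(d:ℝ))^2)
      (fun j _ => sq_nonneg _) (Finset.mem_univ i))
  have hT1 : |T| ≤ s * S := by
    rw [hT]
    calc |∑ i, (x i - 1/(d:ℝ))^3| ≤ ∑ i, |(x i - 1/(d:ℝ))^3| := Finset.abs_sum_le_sum_abs _ _
      _ ≤ ∑ i, s * (x i - 1/(d:ℝ))^2 := by
          refine Finset.sum_le_sum fun i _ => ?_
          rw [abs_pow]
          calc |x i - 1/(d:ℝ)|^3 = |x i - 1/(d:ℝ)| * |x i - 1/(d:ℝ)|^2 := by ring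
            _ ≤ s * (x i - 1/(d:ℝ))^2 := by
                rw [sq_abs]; exact mul_le_mul_of_nonneg_right (habs i) (sq_nonneg _)
      _ = s * S := by rw [← Finset.mul_sum, hS]
  have hS2 : S^2 ≤ s * S := by
    nlinarith [hsS, mul_le_mul_of_nonneg_right hs1.le (mul_nonneg (mul_nonneg hs0 hs0) hs0)]
  obtain ⟨hT1a, hT1b⟩ := abs_le.mp hT1
  have m1 : s * S ≤ (2/(d:ℝ) - C₁)/4 * S := mul_le_mul_of_nonneg_right hsA hS0
  have m2 : s * S ≤ (C₂ - 2/(d:ℝ))/4 * S := mul_le_mul_of_nonneg_right hsB hS0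
  have hsimp : (1 - 1/(d:ℝ)) - (1 - 1/(d:ℝ) - S) = S := by ring
  rw [hkey, hH, hsimp]
  have hsS0 : 0 ≤ s * S := mul_nonneg hs0 hS0
  constructor
  · have m1' : 4 * (s * S) ≤ 2 * (S/(d:ℝ)) - C₁ * S := by
      have h : ((2/(d:ℝ) - C₁)/4) * S = (2 * (S/(d:ℝ)) - C₁ * S) / 4 := by ring
      linarith [h ▸ m1]
    linarith
  · have m2' : 4 * (s * S) ≤ C₂ * S - 2 * (S/(d:ℝ)) := by
      have h : ((C₂ - 2/(d:ℝ))/4) * S = (C₂ * S - 2 * (S/(d:ℝ))) / 4 := by ring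
      linarith [h ▸ m2]
    nlinarith [sq_nonneg S]
end
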